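/- arXiv:2605.17709 — 5 statements merged into one kernel-verified Lean document; each statement's English description precedes it below -/
import Mathlib

section
/- Let J be the 4×4 Jacobian of the linearized crime–police system. For every complex number λ, det(λ·I − J) = (λ + μ)·(λ + 1/τ)·(λ² + b₁·λ + b₀) + (2·μ·π̄/τ)·(λ + η·μ + 1)·(λ + μ + α), where b₁ = (1+η)·μ + 1 + α − ζ and b₀ = (η·μ+1)·(μ+α) − 3·μ·ζ. -/
theorem det_fin_four' {R : Type*} [CommRing R] (M : Matrix (Fin 4) (Fin 4) R) :
    M.det =
      M 0 0 * (M 1 1 * (M 2 2 * M 3 3 - M 2 3 * M 3 2) - M 1 2 * (M 2 1 * M 3 3 - M 2 3 * M 3 1)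
        + M 1 3 * (M 2 1 * M 3 2 - M 2 2 * M 3 1))
      - M 0 1 * (M 1 0 * (M 2 2 * M 3 3 - M 2 3 * M 3 2) - M 1 2 * (M 2 0 * M 3 3 - M 2 3 * M 3 0)
        + M 1 3 * (M 2 0 * M 3 2 - M 2 2 * M 3 0))
      + M 0 2 * (M 1 0 * (M 2 1 * M 3 3 - M 2 3 * M 3 1) - M 1 1 * (M 2 0 * M 3 3 - M 2 3 * M 3 0)
        + M 1 3 * (M 2 0 * M 3 1 - M 2 1 * M 3 0))
      - M 0 3 * (M 1 0 * (M 2 1 * M 3 2 - M 2 2 * M 3 1) - M 1 1 * (M 2 0 * M 3 2 - M 2 2 * M 3 0)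
        + M 1 2 * (M 2 0 * M 3 1 - M 2 1 * M 3 0)) := by
  simp [Matrix.det_succ_row_zero, Fin.sum_univ_succ, Fin.succAbove,
    show ((2:Fin 3).succ : Fin 4) = 3 from rfl, show ((2:Fin 3).castSucc : Fin 4) = 2 from rfl]
  ring

set_option maxHeartbeats 4000000 in
/-- Factorized form of the characteristic polynomial of the 4×4 Jacobian of the
linearized crime–police system. -/
theorem stmt_0 (η μ τ πbar Abar ρbar Hbar α ζ b₁ b₀ : ℝ)
    (hη : 0 < η) (hμ : 0 ≤ μ) (hτ : 0 < τ) (hπ : 0 ≤ πbar)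
    (hA : 0 < Abar) (hρ : 0 < ρbar)
    (hH : Hbar = ρbar * Abar * Real.exp (-πbar))
    (hα : α = Abar * Real.exp (-πbar))
    (hζ : ζ = ρbar * Real.exp (-πbar))
    (hb₁ : b₁ = (1 + η) * μ + 1 + α - ζ)
    (hb₀ : b₀ = (η * μ + 1) * (μ + α) - 3 * μ * ζ)
    (J : Matrix (Fin 4) (Fin 4) ℂ)
    (hJ : J = !![((-η * μ - 1 + ζ : ℝ) : ℂ), ((α : ℝ) : ℂ), ((-Hbar : ℝ) : ℂ), 0;
                 ((2 * μ * ρbar / Abar - ζ : ℝ) : ℂ), ((-μ - α : ℝ) : ℂ), 0, 0;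
                 0, 0, ((-μ : ℝ) : ℂ), ((2 * μ * πbar / Hbar : ℝ) : ℂ);
                 ((ζ / τ : ℝ) : ℂ), ((α / τ : ℝ) : ℂ), ((-Hbar / τ : ℝ) : ℂ), ((-1 / τ : ℝ) : ℂ)]) :
    ∀ lam : ℂ,
      (lam • (1 : Matrix (Fin 4) (Fin 4) ℂ) - J).det
        = (lam + (μ : ℂ)) * (lam + 1 / (τ : ℂ)) * (lam ^ 2 + (b₁ : ℂ) * lam + (b₀ : ℂ))
          + (2 * (μ : ℂ) * (πbar : ℂ) / (τ : ℂ)) * (lam + (η : ℂ) * (μ : ℂ) + 1)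
            * (lam + (μ : ℂ) + (α : ℂ)) := by
  intro lam
  subst hJ hH hα hζ hb₁ hb₀
  obtain ⟨e, he0, hee⟩ : ∃ e : ℝ, 0 < e ∧ Real.exp (-πbar) = e := ⟨_, Real.exp_pos _, rfl⟩
  rw [hee]
  have hA' : (Abar : ℂ) ≠ 0 := Complex.ofReal_ne_zero.mpr hA.ne'
  have hτ' : (τ : ℂ) ≠ 0 := Complex.ofReal_ne_zero.mpr hτ.ne'
  have hρ' : (ρbar : ℂ) ≠ 0 := Complex.ofReal_ne_zero.mpr hρ.ne'
  have he : ((e : ℝ) : ℂ) ≠ 0 := Complex.ofReal_ne_zero.mpr he0.ne'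
  rw [det_fin_four']
  simp only [Matrix.sub_apply, Matrix.smul_apply, Matrix.one_apply, Matrix.cons_val',
    Matrix.cons_val_zero, Matrix.cons_val_one, Matrix.cons_val_two, Matrix.cons_val_three,
    Matrix.head_cons, Matrix.tail_cons, Matrix.vecHead, Matrix.vecTail, Matrix.empty_val',
    Matrix.cons_val_fin_one, Matrix.head_fin_const, Function.comp, smul_eq_mul]
  norm_num
  push_cast
  obtain ⟨u, hu1, hu2⟩ : ∃ u : ℝ, ((τ : ℂ))⁻¹ = (u : ℂ) ∧ (τ : ℂ) * (u : ℂ) = 1 :=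
    ⟨τ⁻¹, by push_cast; ring, by push_cast; field_simp⟩
  obtain ⟨p, hp1, hp2⟩ : ∃ p : ℝ,
      2 * (μ : ℂ) * (ρbar : ℂ) / (Abar : ℂ) = (p : ℂ) ∧
      (Abar : ℂ) * (p : ℂ) = 2 * (μ : ℂ) * (ρbar : ℂ) :=
    ⟨2 * μ * ρbar / Abar, by push_cast; ring, by push_cast; field_simp⟩
  obtain ⟨w, hw1, hw2⟩ : ∃ w : ℝ,
      2 * (μ : ℂ) * (πbar : ℂ) / ((ρbar : ℂ) * (Abar : ℂ) * (e : ℂ)) = (w : ℂ) ∧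
      2 * (μ : ℂ) * (πbar : ℂ) = (ρbar : ℂ) * (Abar : ℂ) * (e : ℂ) * (w : ℂ) :=
    ⟨2 * μ * πbar / (ρbar * Abar * e), by push_cast; ring, by push_cast; field_simp⟩
  rw [hw1, hp1, hw2]
  simp only [div_eq_mul_inv, hu1, one_mul]
  linear_combination (-(e : ℂ) * (lam + (μ : ℂ)) * (lam + (u : ℂ))) * hp2
end

section
/- Let J be the 4×4 Jacobian of the linearized crime–police system. For every complex number λ, det(λ·I − J) = λ⁴ + a₃·λ³ + a₂·λ² + a₁·λ + a₀, where a₃ = (2+η)·μ + 1 + α − ζ + 1/τ; a₂ = (1+2η)·μ² + 2·μ + (1+η)·μ·α + α − 4·μ·ζ + (1/τ)·[(2+η)·μ + 1 + α − ζ + 2·μ·π̄]; a₁ = μ·(η·μ+1)·(μ+α) − 3·μ²·ζ + (1/τ)·[(1+2η)·μ² + 2·μ + (1+η)·μ·α + α − 4·μ·ζ + 2·μ·π̄·((1+η)·μ + 1 + α)]; and a₀ = (μ/τ)·[(1+2·π̄)·(η·μ+1)·(μ+α) − 3·μ·ζ]. -/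
theorem det4 {R : Type*} [CommRing R] (a b c d e f g h i j k l m n o p : R) :
    Matrix.det !![a,b,c,d; e,f,g,h; i,j,k,l; m,n,o,p]
      = a*(f*(k*p - l*o) - g*(j*p - l*n) + h*(j*o - k*n))
      - b*(e*(k*p - l*o) - g*(i*p - l*m) + h*(i*o - k*m))
      + c*(e*(j*p - l*n) - f*(i*p - l*m) + h*(i*n - j*m))
      - d*(e*(j*o - k*n) - f*(i*o - k*m) + g*(i*n - j*m)) := by
  rw [Matrix.det_succ_row_zero]
  simp [Fin.sum_univ_succ, Matrix.det_fin_three, Matrix.submatrix_apply, Fin.succAbove,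
    Fin.succ, Fin.castSucc, Fin.castAdd, Fin.castLE]
  ring

set_option maxHeartbeats 1600000 in
/-- Expanded form of the characteristic polynomial of the 4×4 Jacobian of the
linearized crime–police system. -/
theorem stmt_1 (η μ τ πbar Abar ρbar Hbar α ζ a₀ a₁ a₂ a₃ : ℝ)
    (hη : 0 < η) (hμ : 0 ≤ μ) (hτ : 0 < τ) (hπ : 0 ≤ πbar)
    (hA : 0 < Abar) (hρ : 0 < ρbar)
    (hH : Hbar = ρbar * Abar * Real.exp (-πbar))
    (hα : α = Abar * Real.exp (-πbar))
    (hζ : ζ = ρbar * Real.exp (-πbar))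
    (ha₃ : a₃ = (2 + η) * μ + 1 + α - ζ + 1 / τ)
    (ha₂ : a₂ = (1 + 2 * η) * μ ^ 2 + 2 * μ + (1 + η) * μ * α + α - 4 * μ * ζ
        + (1 / τ) * ((2 + η) * μ + 1 + α - ζ + 2 * μ * πbar))
    (ha₁ : a₁ = μ * (η * μ + 1) * (μ + α) - 3 * μ ^ 2 * ζ
        + (1 / τ) * ((1 + 2 * η) * μ ^ 2 + 2 * μ + (1 + η) * μ * α + α - 4 * μ * ζ
            + 2 * μ * πbar * ((1 + η) * μ + 1 + α)))
    (ha₀ : a₀ = (μ / τ) * ((1 + 2 * πbar) * (η * μ + 1) * (μ + α) - 3 * μ * ζ))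
    (J : Matrix (Fin 4) (Fin 4) ℂ)
    (hJ : J = !![((-η * μ - 1 + ζ : ℝ) : ℂ), ((α : ℝ) : ℂ), ((-Hbar : ℝ) : ℂ), 0;
                 ((2 * μ * ρbar / Abar - ζ : ℝ) : ℂ), ((-μ - α : ℝ) : ℂ), 0, 0;
                 0, 0, ((-μ : ℝ) : ℂ), ((2 * μ * πbar / Hbar : ℝ) : ℂ);
                 ((ζ / τ : ℝ) : ℂ), ((α / τ : ℝ) : ℂ), ((-Hbar / τ : ℝ) : ℂ), ((-1 / τ : ℝ) : ℂ)]) :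
    ∀ lam : ℂ,
      (lam • (1 : Matrix (Fin 4) (Fin 4) ℂ) - J).det
        = lam ^ 4 + (a₃ : ℂ) * lam ^ 3 + (a₂ : ℂ) * lam ^ 2 + (a₁ : ℂ) * lam + (a₀ : ℂ) := by
  intro lam
  have hE : (0:ℝ) < Real.exp (-πbar) := Real.exp_pos _
  have hHpos : (0:ℝ) < Hbar := by rw [hH]; positivity
  have hτc : (τ:ℂ) ≠ 0 := by exact_mod_cast ne_of_gt hτ
  have hAc : (Abar:ℂ) ≠ 0 := by exact_mod_cast ne_of_gt hA
  have hHc : (Hbar:ℂ) ≠ 0 := by exact_mod_cast ne_of_gt hHpos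
  have hHe : (Hbar:ℂ) = (ρbar:ℂ) * (Abar:ℂ) * Complex.exp (-(πbar:ℂ)) := by
    rw [hH]; push_cast; ring
  -- the resolvent matrix
  have hM : lam • (1 : Matrix (Fin 4) (Fin 4) ℂ) - J
      = !![lam - ((-η * μ - 1 + ζ : ℝ) : ℂ), -((α : ℝ) : ℂ), -((-Hbar : ℝ) : ℂ), 0;
           -((2 * μ * ρbar / Abar - ζ : ℝ) : ℂ), lam - ((-μ - α : ℝ) : ℂ), 0, 0;
           0, 0, lam - ((-μ : ℝ) : ℂ), -((2 * μ * πbar / Hbar : ℝ) : ℂ);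
           -((ζ / τ : ℝ) : ℂ), -((α / τ : ℝ) : ℂ), -((-Hbar / τ : ℝ) : ℂ), lam - ((-1 / τ : ℝ) : ℂ)] := by
    subst hJ
    ext i j
    fin_cases i <;> fin_cases j <;> simp [Matrix.one_apply, sub_eq_add_neg]
  set X : Matrix (Fin 4) (Fin 4) ℂ :=
      !![lam - ((-η * μ - 1 + ζ : ℝ) : ℂ), -((α : ℝ) : ℂ), -((-Hbar : ℝ) : ℂ), 0;
         -((2 * μ * ρbar / Abar - ζ : ℝ) : ℂ), lam - ((-μ - α : ℝ) : ℂ), 0, 0;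
         0, 0, lam - ((-μ : ℝ) : ℂ), -((2 * μ * πbar / Hbar : ℝ) : ℂ);
         -((ζ / τ : ℝ) : ℂ), -((α / τ : ℝ) : ℂ), -((-Hbar / τ : ℝ) : ℂ), lam - ((-1 / τ : ℝ) : ℂ)] with hX
  -- scale row 4 by τ and columns 1,4 by Abar, Hbar to clear denominators
  have hprod : (!![1,0,0,0; 0,1,0,0; 0,0,1,0; 0,0,0,(τ:ℂ)] : Matrix (Fin 4) (Fin 4) ℂ) * X
        * (!![(Abar:ℂ),0,0,0; 0,1,0,0; 0,0,1,0; 0,0,0,(Hbar:ℂ)] : Matrix (Fin 4) (Fin 4) ℂ)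
      = !![(lam - ((-η * μ - 1 + ζ : ℝ) : ℂ)) * (Abar:ℂ), -((α : ℝ) : ℂ), ((Hbar : ℝ) : ℂ), 0;
           -((2 * μ * ρbar - ζ * Abar : ℝ) : ℂ), lam - ((-μ - α : ℝ) : ℂ), 0, 0;
           0, 0, lam - ((-μ : ℝ) : ℂ), -((2 * μ * πbar : ℝ) : ℂ);
           -((ζ * Abar : ℝ) : ℂ), -((α : ℝ) : ℂ), ((Hbar : ℝ) : ℂ), (lam * (τ:ℂ) + 1) * (Hbar:ℂ)] := by
    rw [hX]
    ext i j
    fin_cases i <;> fin_cases j <;> simp [Matrix.mul_apply, Fin.sum_univ_succ] <;>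
      push_cast <;> field_simp <;> simp <;> ring
  have hdet2 : X.det * ((τ:ℂ) * (Abar:ℂ) * (Hbar:ℂ))
      = ((!![1,0,0,0; 0,1,0,0; 0,0,1,0; 0,0,0,(τ:ℂ)] : Matrix (Fin 4) (Fin 4) ℂ) * X
        * (!![(Abar:ℂ),0,0,0; 0,1,0,0; 0,0,1,0; 0,0,0,(Hbar:ℂ)] : Matrix (Fin 4) (Fin 4) ℂ)).det := by
    have hDr : (!![1,0,0,0; 0,1,0,0; 0,0,1,0; 0,0,0,(τ:ℂ)] : Matrix (Fin 4) (Fin 4) ℂ).det = (τ:ℂ) := by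
      rw [det4]; ring
    have hDc : (!![(Abar:ℂ),0,0,0; 0,1,0,0; 0,0,1,0; 0,0,0,(Hbar:ℂ)] : Matrix (Fin 4) (Fin 4) ℂ).det
        = (Abar:ℂ) * (Hbar:ℂ) := by
      rw [det4]; ring
    rw [Matrix.det_mul, Matrix.det_mul, hDr, hDc]
    ring
  have hc : (τ:ℂ) * (Abar:ℂ) * (Hbar:ℂ) ≠ 0 := by
    exact mul_ne_zero (mul_ne_zero hτc hAc) hHc
  rw [hM]
  refine mul_right_cancel₀ hc ?_
  rw [hdet2, hprod, det4]
  subst hα hζ ha₀ ha₁ ha₂ ha₃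
  push_cast
  rw [hHe]
  field_simp
  ring_nf
end

section
/- Let J be the 4×4 Jacobian of the linearized crime–police system with π̄ = 0 (no police; then α = Ā and ζ = ρ̄). For every complex number λ, det(λ·I − J) = (λ + μ)·(λ + 1/τ)·(λ² + b₁·λ + b₀), where b₁ = (1+η)·μ + 1 + Ā − ρ̄ and b₀ = (η·μ+1)·(μ+Ā) − 3·μ·ρ̄; in particular the characteristic polynomial splits into the explicit linear factors λ + μ and λ + 1/τ and a quadratic factor whose coefficients do not depend on τ. -/
set_option maxHeartbeats 2000000

/-- In the no-police case `π̄ = 0`, the characteristic polynomial of the 4×4 Jacobian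
splits into the explicit linear factors `λ + μ` and `λ + 1/τ` and a quadratic factor
whose coefficients do not depend on `τ`. -/
theorem stmt_2 (η μ τ Abar ρbar Hbar b₁ b₀ : ℝ)
    (hη : 0 < η) (hμ : 0 ≤ μ) (hτ : 0 < τ)
    (hA : 0 < Abar) (hρ : 0 < ρbar)
    (hH : Hbar = ρbar * Abar)
    (hb₁ : b₁ = (1 + η) * μ + 1 + Abar - ρbar)
    (hb₀ : b₀ = (η * μ + 1) * (μ + Abar) - 3 * μ * ρbar)
    (J : Matrix (Fin 4) (Fin 4) ℂ)
    (hJ : J = !![((-η * μ - 1 + ρbar : ℝ) : ℂ), ((Abar : ℝ) : ℂ), ((-Hbar : ℝ) : ℂ), 0;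
                 ((2 * μ * ρbar / Abar - ρbar : ℝ) : ℂ), ((-μ - Abar : ℝ) : ℂ), 0, 0;
                 0, 0, ((-μ : ℝ) : ℂ), 0;
                 ((ρbar / τ : ℝ) : ℂ), ((Abar / τ : ℝ) : ℂ), ((-Hbar / τ : ℝ) : ℂ), ((-1 / τ : ℝ) : ℂ)]) :
    ∀ lam : ℂ,
      (lam • (1 : Matrix (Fin 4) (Fin 4) ℂ) - J).det
        = (lam + (μ : ℂ)) * (lam + 1 / (τ : ℂ)) * (lam ^ 2 + (b₁ : ℂ) * lam + (b₀ : ℂ)) := by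
  intro lam
  have hA' : (Abar : ℂ) ≠ 0 := by exact_mod_cast hA.ne'
  have hτ' : (τ : ℂ) ≠ 0 := by exact_mod_cast hτ.ne'
  subst hJ hH hb₁ hb₀
  rw [show (lam • (1 : Matrix (Fin 4) (Fin 4) ℂ) - !![((-η * μ - 1 + ρbar : ℝ) : ℂ), ((Abar : ℝ) : ℂ), ((-(ρbar*Abar) : ℝ) : ℂ), 0;
                 ((2 * μ * ρbar / Abar - ρbar : ℝ) : ℂ), ((-μ - Abar : ℝ) : ℂ), 0, 0;
                 0, 0, ((-μ : ℝ) : ℂ), 0;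
                 ((ρbar / τ : ℝ) : ℂ), ((Abar / τ : ℝ) : ℂ), ((-(ρbar*Abar) / τ : ℝ) : ℂ), ((-1 / τ : ℝ) : ℂ)]) =
      !![lam - ((-η * μ - 1 + ρbar : ℝ) : ℂ), -((Abar : ℝ) : ℂ), -((-(ρbar*Abar) : ℝ) : ℂ), 0;
         -((2 * μ * ρbar / Abar - ρbar : ℝ) : ℂ), lam - ((-μ - Abar : ℝ) : ℂ), 0, 0;
         0, 0, lam - ((-μ : ℝ) : ℂ), 0;
         -((ρbar / τ : ℝ) : ℂ), -((Abar / τ : ℝ) : ℂ), -((-(ρbar*Abar) / τ : ℝ) : ℂ), lam - ((-1 / τ : ℝ) : ℂ)] from by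
    ext i j
    fin_cases i <;> fin_cases j <;>
      simp [Matrix.one_apply, Matrix.smul_apply, sub_eq_add_neg]]
  simp [Matrix.det_succ_row_zero, Fin.sum_univ_succ, Fin.succAbove]
  push_cast
  field_simp
  ring
end

section
/- Let J be the 4×4 Jacobian of the linearized crime–police system with π̄ = 0 (no police) and assume μ > 0. If λ ∈ ℂ is a root of det(λ·I − J) = 0 with Re(λ) ≥ 0, then λ² + b₁·λ + b₀ = 0, where b₁ = (1+η)·μ + 1 + Ā − ρ̄ and b₀ = (η·μ+1)·(μ+Ā) − 3·μ·ρ̄ are independent of τ. Hence as τ varies no new root with nonnegative real part can appear, and a delay-induced Hopf bifurcation is impossible without police. -/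
theorem my_det_fin_four (M : Matrix (Fin 4) (Fin 4) ℂ) :
    M.det =
      M 0 0 * M 1 1 * M 2 2 * M 3 3 - M 0 0 * M 1 1 * M 2 3 * M 3 2 -
        M 0 0 * M 1 2 * M 2 1 * M 3 3 + M 0 0 * M 1 2 * M 2 3 * M 3 1 +
        M 0 0 * M 1 3 * M 2 1 * M 3 2 - M 0 0 * M 1 3 * M 2 2 * M 3 1 -
        M 0 1 * M 1 0 * M 2 2 * M 3 3 + M 0 1 * M 1 0 * M 2 3 * M 3 2 +
        M 0 1 * M 1 2 * M 2 0 * M 3 3 - M 0 1 * M 1 2 * M 2 3 * M 3 0 -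
        M 0 1 * M 1 3 * M 2 0 * M 3 2 + M 0 1 * M 1 3 * M 2 2 * M 3 0 +
        M 0 2 * M 1 0 * M 2 1 * M 3 3 - M 0 2 * M 1 0 * M 2 3 * M 3 1 -
        M 0 2 * M 1 1 * M 2 0 * M 3 3 + M 0 2 * M 1 1 * M 2 3 * M 3 0 +
        M 0 2 * M 1 3 * M 2 0 * M 3 1 - M 0 2 * M 1 3 * M 2 1 * M 3 0 -
        M 0 3 * M 1 0 * M 2 1 * M 3 2 + M 0 3 * M 1 0 * M 2 2 * M 3 1 +
        M 0 3 * M 1 1 * M 2 0 * M 3 2 - M 0 3 * M 1 1 * M 2 2 * M 3 0 -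
        M 0 3 * M 1 2 * M 2 0 * M 3 1 + M 0 3 * M 1 2 * M 2 1 * M 3 0 := by
  rw [Matrix.det_succ_row_zero]
  simp [Fin.sum_univ_succ, Matrix.det_fin_three, Matrix.submatrix_apply, Fin.succAbove,
    Fin.ext_iff, show (Fin.succ 2 : Fin 4) = 3 by decide,
    show (Fin.castSucc 2 : Fin 4) = 2 by decide]
  ring

/-- Without police (`π̄ = 0`) and for a nonzero spatial mode `μ > 0`, any root of the
characteristic polynomial with nonnegative real part must be a root of the
`τ`-independent quadratic `λ² + b₁ λ + b₀`; hence no delay-induced Hopf bifurcation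
is possible without police. -/
theorem stmt_3 (η μ τ Abar ρbar Hbar b₁ b₀ : ℝ)
    (hη : 0 < η) (hμ : 0 < μ) (hτ : 0 < τ)
    (hA : 0 < Abar) (hρ : 0 < ρbar)
    (hH : Hbar = ρbar * Abar)
    (hb₁ : b₁ = (1 + η) * μ + 1 + Abar - ρbar)
    (hb₀ : b₀ = (η * μ + 1) * (μ + Abar) - 3 * μ * ρbar)
    (J : Matrix (Fin 4) (Fin 4) ℂ)
    (hJ : J = !![((-η * μ - 1 + ρbar : ℝ) : ℂ), ((Abar : ℝ) : ℂ), ((-Hbar : ℝ) : ℂ), 0;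
                 ((2 * μ * ρbar / Abar - ρbar : ℝ) : ℂ), ((-μ - Abar : ℝ) : ℂ), 0, 0;
                 0, 0, ((-μ : ℝ) : ℂ), 0;
                 ((ρbar / τ : ℝ) : ℂ), ((Abar / τ : ℝ) : ℂ), ((-Hbar / τ : ℝ) : ℂ), ((-1 / τ : ℝ) : ℂ)]) :
    ∀ lam : ℂ,
      (lam • (1 : Matrix (Fin 4) (Fin 4) ℂ) - J).det = 0 →
      0 ≤ lam.re →
      lam ^ 2 + (b₁ : ℂ) * lam + (b₀ : ℂ) = 0 := by
  intro lam hdet hre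
  have hA' : (Abar : ℂ) ≠ 0 := by exact_mod_cast hA.ne'
  have hτ' : (τ : ℂ) ≠ 0 := by exact_mod_cast hτ.ne'
  have key : (lam + (μ : ℂ)) * (lam + 1 / (τ : ℂ)) *
      (lam ^ 2 + (b₁ : ℂ) * lam + (b₀ : ℂ)) = 0 := by
    rw [← hdet, my_det_fin_four]
    subst hJ hb₁ hb₀ hH
    simp only [Matrix.sub_apply, Matrix.smul_apply, Matrix.one_apply, Matrix.cons_val',
      Matrix.cons_val_zero, Matrix.cons_val_one, Matrix.head_cons, Matrix.empty_val',
      Matrix.cons_val_fin_one, Matrix.head_fin_const, Matrix.of_apply, Matrix.cons_val_two,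
      Matrix.cons_val_three, Matrix.tail_cons, smul_eq_mul]
    norm_num
    push_cast
    field_simp
    ring
  rcases mul_eq_zero.1 key with h | hq
  · exfalso
    rcases mul_eq_zero.1 h with h1 | h2
    · have hl : lam = -(μ : ℂ) := by linear_combination h1
      rw [hl] at hre
      simp at hre
      linarith
    · have hl : lam = -(1 / (τ : ℂ)) := by linear_combination h2
      rw [hl] at hre
      have h3 : ((1 : ℂ) / (τ : ℂ)).re = 1 / τ := by norm_cast
      simp only [Complex.neg_re, h3] at hre
      have : 0 < 1 / τ := by positivity
      linarith
  · exact hq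
end

section
/- The discrete agent-based model admits a spatially homogeneous equilibrium. Let Δt > 0, h > 0, Γ > 0, θ > 0, ω > 0, β ≥ 0, m̄ ≥ 0, A⁰ > 0 and 0 ≤ Σ < 1. Define E := exp(−β·m̄/h²), B̄ := (θ·Γ/ω)·(1−Σ)·E, Ā := A⁰ + B̄, p̄ := 1 − exp(−Ā·E·Δt), n̄ := (Δt·Γ/p̄)·(1−Σ)·E, and H̄ := n̄·p̄/(h²·Δt). Then: (i) 0 < p̄ < 1; (ii) B̄ = B̄·(1 − ω·Δt) + θ·n̄·p̄ (the attractiveness update is stationary, the discrete Laplacian vanishing on homogeneous states); (iii) n̄ = n̄·(1 − p̄) + E·Γ·(1−Σ)·Δt (the criminal-number update is stationary); and (iv) H̄ = (1 − Δt/τ)·H̄ + (Δt/τ)·(n̄·p̄/(h²·Δt)) for every τ > 0 (the delayed crime signal update is stationary). -/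
/-- The discrete agent-based model admits a spatially homogeneous equilibrium: the
burglary probability lies strictly between 0 and 1, and the attractiveness update,
criminal-number update, and delayed-crime-signal update are all stationary.
(`Sig` denotes the arrest probability Σ.) -/
theorem stmt_10 (Δt h Γ θ ω β mbar A₀ Sig E Bbar Abar pbar nbar Hbar : ℝ)
    (hΔt : 0 < Δt) (hh : 0 < h) (hΓ : 0 < Γ) (hθ : 0 < θ) (hω : 0 < ω)
    (hβ : 0 ≤ β) (hm : 0 ≤ mbar) (hA₀ : 0 < A₀) (hSig₀ : 0 ≤ Sig) (hSig₁ : Sig < 1)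
    (hE : E = Real.exp (-β * mbar / h ^ 2))
    (hB : Bbar = (θ * Γ / ω) * (1 - Sig) * E)
    (hA : Abar = A₀ + Bbar)
    (hp : pbar = 1 - Real.exp (-(Abar * E * Δt)))
    (hn : nbar = (Δt * Γ / pbar) * (1 - Sig) * E)
    (hHb : Hbar = nbar * pbar / (h ^ 2 * Δt)) :
    (0 < pbar ∧ pbar < 1)
    ∧ Bbar = Bbar * (1 - ω * Δt) + θ * (nbar * pbar)
    ∧ nbar = nbar * (1 - pbar) + E * Γ * (1 - Sig) * Δt
    ∧ ∀ τ : ℝ, 0 < τ →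
        Hbar = (1 - Δt / τ) * Hbar + (Δt / τ) * (nbar * pbar / (h ^ 2 * Δt)) := by
  have hEpos : 0 < E := hE ▸ Real.exp_pos _
  have hSpos : 0 < 1 - Sig := by linarith
  have hBpos : 0 < Bbar := by
    rw [hB]; positivity
  have hApos : 0 < Abar := by rw [hA]; linarith
  have hx : 0 < Abar * E * Δt := by positivity
  have hp1 : pbar < 1 := by
    rw [hp]; have := Real.exp_pos (-(Abar * E * Δt)); linarith
  have hp0 : 0 < pbar := by
    rw [hp]
    have : Real.exp (-(Abar * E * Δt)) < 1 := by
      rw [Real.exp_lt_one_iff]; linarith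
    linarith
  have hnp : nbar * pbar = Δt * Γ * (1 - Sig) * E := by
    rw [hn]; field_simp
  refine ⟨⟨hp0, hp1⟩, ?_, ?_, ?_⟩
  · rw [hnp, hB]; field_simp; ring
  · have : nbar * pbar = E * Γ * (1 - Sig) * Δt := by rw [hnp]; ring
    linarith [this]
  · intro τ hτ
    field_simp [hHb]
    have hH2 : Hbar * h ^ 2 * Δt = nbar * pbar := by
      rw [hHb, mul_assoc (nbar * pbar / (h ^ 2 * Δt)), div_mul_cancel₀]; positivity
    linarith
end
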